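/- Define P_α(t; r_α) for 0 < r_α and t > 0 by P_α(t;r_α) = (1/2)[erf((r_R − r_α)/√(4Dt)) + erf((r_R + r_α)/√(4Dt))]·e^{−k_d t} + (1/r_α)√(Dt/π)[exp(−(r_R+r_α)²/(4Dt) − k_d t) − exp(−(r_R−r_α)²/(4Dt) − k_d t)]. Then the average (1/(2 r_T)) ∫_{−r_T}^{r_T} P_α(t; √(r_T² + r_0² − 2 r_0 x)) dx equals P_u(t) = (1/(8 r_0 r_T))[ξ₁(r_0−r_T,t) + ξ₁(r_T−r_0,t) − ξ₁(r_0+r_T,t) − ξ₁(−r_0−r_T,t)] + (Dt/(2 r_T r_0))[ξ₂(r_T+r_0,t) + ξ₂(−r_T−r_0,t) − ξ₂(r_0−r_T,t) − ξ₂(r_T−r_0,t)], where ξ₁(z,t) = e^{−(r_R−z)²/(4Dt) − k_d t}(r_R+z)√(4Dt/π) + (r_R² + 2Dt − z²) erf((r_R−z)/√(4Dt)) e^{−k_d t} and ξ₂(z,t) = erf((r_R+z)/√(4Dt)) e^{−k_d t}. -/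

import Mathlib

open MeasureTheory

noncomputable def erf (x : ℝ) : ℝ :=
  (2 / Real.sqrt Real.pi) * ∫ s in (0 : ℝ)..x, Real.exp (-s ^ 2)

noncomputable def Pα (D k_d r_R t rα : ℝ) : ℝ :=
  (1 / 2) * (erf ((r_R - rα) / Real.sqrt (4 * D * t)) +
      erf ((r_R + rα) / Real.sqrt (4 * D * t))) * Real.exp (-k_d * t) +
    (1 / rα) * Real.sqrt (D * t / Real.pi) *
      (Real.exp (-(r_R + rα) ^ 2 / (4 * D * t) - k_d * t) -
        Real.exp (-(r_R - rα) ^ 2 / (4 * D * t) - k_d * t))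

noncomputable def ξ₁ (D k_d r_R z t : ℝ) : ℝ :=
  Real.exp (-(r_R - z) ^ 2 / (4 * D * t) - k_d * t) * (r_R + z) *
      Real.sqrt (4 * D * t / Real.pi) +
    (r_R ^ 2 + 2 * D * t - z ^ 2) * erf ((r_R - z) / Real.sqrt (4 * D * t)) *
      Real.exp (-k_d * t)

noncomputable def ξ₂ (D k_d r_R z t : ℝ) : ℝ :=
  erf ((r_R + z) / Real.sqrt (4 * D * t)) * Real.exp (-k_d * t)

lemma erf_hasDerivAt (x : ℝ) :
    HasDerivAt erf (2 / Real.sqrt Real.pi * Real.exp (-x ^ 2)) x := by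
  have hc : Continuous fun s : ℝ => Real.exp (-s ^ 2) := by continuity
  have h := (intervalIntegral.integral_hasStrictDerivAt_right
    (hc.intervalIntegrable 0 x) (hc.stronglyMeasurableAtFilter _ _) hc.continuousAt).hasDerivAt
  exact h.const_mul (2 / Real.sqrt Real.pi)

lemma erf_continuous : Continuous erf :=
  continuous_iff_continuousAt.2 fun x => (erf_hasDerivAt x).continuousAt

lemma key (D k_d r_R t u : ℝ) (hD : 0 < D) (ht : 0 < t) (hu : 0 < u) :
    HasDerivAt (fun v : ℝ =>
      -(1/4) * ((Real.exp (-(r_R - v) ^ 2 / (4 * D * t) - k_d * t) * (r_R + v) *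
            Real.sqrt (4 * D * t / Real.pi) +
          (r_R ^ 2 + 2 * D * t - v ^ 2) * erf ((r_R - v) / Real.sqrt (4 * D * t)) *
            Real.exp (-k_d * t)) +
        (Real.exp (-(r_R + v) ^ 2 / (4 * D * t) - k_d * t) * (r_R - v) *
            Real.sqrt (4 * D * t / Real.pi) +
          (r_R ^ 2 + 2 * D * t - v ^ 2) * erf ((r_R + v) / Real.sqrt (4 * D * t)) *
            Real.exp (-k_d * t))) +
      D * t * ((erf ((r_R + v) / Real.sqrt (4 * D * t)) +
          erf ((r_R - v) / Real.sqrt (4 * D * t))) * Real.exp (-k_d * t)))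
      (u * Pα D k_d r_R t u) u := by
  have h4 : (0:ℝ) ≤ 4 * D * t := by positivity
  have hs0 : 0 < Real.sqrt (4 * D * t) := Real.sqrt_pos.2 (by positivity)
  have hπ : 0 < Real.sqrt Real.pi := Real.sqrt_pos.2 Real.pi_pos
  -- building blocks
  have hrm : HasDerivAt (fun v : ℝ => r_R - v) (-1) u := (hasDerivAt_id u).const_sub r_R
  have hrp : HasDerivAt (fun v : ℝ => r_R + v) 1 u := (hasDerivAt_id u).const_add r_R
  have hdm : HasDerivAt (fun v : ℝ => (r_R - v) / Real.sqrt (4 * D * t))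
      (-1 / Real.sqrt (4 * D * t)) u := hrm.div_const _
  have hdp : HasDerivAt (fun v : ℝ => (r_R + v) / Real.sqrt (4 * D * t))
      (1 / Real.sqrt (4 * D * t)) u := hrp.div_const _
  have herfm := (erf_hasDerivAt ((r_R - u) / Real.sqrt (4 * D * t))).comp u hdm
  have herfp := (erf_hasDerivAt ((r_R + u) / Real.sqrt (4 * D * t))).comp u hdp
  have hgm : HasDerivAt (fun v : ℝ => -(r_R - v) ^ 2 / (4 * D * t) - k_d * t)
      (-(2 * (r_R - u) ^ 1 * -1) / (4 * D * t)) u :=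
    (((hrm.pow 2).neg.div_const _).sub_const _)
  have hgp : HasDerivAt (fun v : ℝ => -(r_R + v) ^ 2 / (4 * D * t) - k_d * t)
      (-(2 * (r_R + u) ^ 1 * 1) / (4 * D * t)) u :=
    (((hrp.pow 2).neg.div_const _).sub_const _)
  have hq : HasDerivAt (fun v : ℝ => r_R ^ 2 + 2 * D * t - v ^ 2) (-(2 * u ^ 1)) u :=
    (hasDerivAt_pow 2 u).const_sub _ |>.congr_deriv (by ring)
  have hA : HasDerivAt (fun v : ℝ =>
      Real.exp (-(r_R - v) ^ 2 / (4 * D * t) - k_d * t) * (r_R + v) *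
          Real.sqrt (4 * D * t / Real.pi) +
        (r_R ^ 2 + 2 * D * t - v ^ 2) * erf ((r_R - v) / Real.sqrt (4 * D * t)) *
          Real.exp (-k_d * t) +
      (Real.exp (-(r_R + v) ^ 2 / (4 * D * t) - k_d * t) * (r_R - v) *
          Real.sqrt (4 * D * t / Real.pi) +
        (r_R ^ 2 + 2 * D * t - v ^ 2) * erf ((r_R + v) / Real.sqrt (4 * D * t)) *
          Real.exp (-k_d * t))) _ u :=
    ((((hgm.exp.mul hrp).mul_const _).add (((hq.mul herfm).mul_const _))).add
      (((hgp.exp.mul hrm).mul_const _).add (((hq.mul herfp).mul_const _))))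
  have hB : HasDerivAt (fun v : ℝ =>
      (erf ((r_R + v) / Real.sqrt (4 * D * t)) + erf ((r_R - v) / Real.sqrt (4 * D * t))) *
        Real.exp (-k_d * t)) _ u := (herfp.add herfm).mul_const _
  refine ((hA.const_mul (-(1/4))).add (hB.const_mul (D * t))).congr_deriv ?_
  have hsq : Real.sqrt (4 * D * t) ^ 2 = 4 * D * t := Real.sq_sqrt h4
  have hd1 : Real.sqrt (4 * D * t / Real.pi) = Real.sqrt (4 * D * t) / Real.sqrt Real.pi :=
    Real.sqrt_div h4 Real.pi
  have hd2 : Real.sqrt (D * t / Real.pi) = Real.sqrt (4 * D * t) / (2 * Real.sqrt Real.pi) := by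
    rw [Real.sqrt_div (by positivity : (0:ℝ) ≤ D * t),
      show (4:ℝ) * D * t = 2 ^ 2 * (D * t) by ring,
      Real.sqrt_mul (by positivity) (D * t), Real.sqrt_sq (by norm_num : (0:ℝ) ≤ 2)]
    ring
  simp only [Pα, Function.comp, neg_mul, sub_eq_add_neg, Real.exp_add, div_pow, hsq,
    neg_div, hd1, hd2]
  rw [show (4:ℝ) * D * t = Real.sqrt (4 * D * t) ^ 2 from hsq.symm,
    show (2:ℝ) * D * t = Real.sqrt (4 * D * t) ^ 2 / 2 by rw [hsq]; ring,
    show D * t = Real.sqrt (4 * D * t) ^ 2 / 4 by rw [hsq]; ring]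
  field_simp
  simp only [Real.sqrt_sq (Real.sqrt_nonneg _)]
  ring

noncomputable def Hfun (D k_d r_R t v : ℝ) : ℝ :=
  -(1/4) * ((Real.exp (-(r_R - v) ^ 2 / (4 * D * t) - k_d * t) * (r_R + v) *
        Real.sqrt (4 * D * t / Real.pi) +
      (r_R ^ 2 + 2 * D * t - v ^ 2) * erf ((r_R - v) / Real.sqrt (4 * D * t)) *
        Real.exp (-k_d * t)) +
    (Real.exp (-(r_R + v) ^ 2 / (4 * D * t) - k_d * t) * (r_R - v) *
        Real.sqrt (4 * D * t / Real.pi) +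
      (r_R ^ 2 + 2 * D * t - v ^ 2) * erf ((r_R + v) / Real.sqrt (4 * D * t)) *
        Real.exp (-k_d * t))) +
  D * t * ((erf ((r_R + v) / Real.sqrt (4 * D * t)) +
      erf ((r_R - v) / Real.sqrt (4 * D * t))) * Real.exp (-k_d * t))

lemma key' (D k_d r_R t u : ℝ) (hD : 0 < D) (ht : 0 < t) (hu : 0 < u) :
    HasDerivAt (Hfun D k_d r_R t) (u * Pα D k_d r_R t u) u :=
  key D k_d r_R t u hD ht hu

lemma Hfun_eq (D k_d r_R t v : ℝ) :
    Hfun D k_d r_R t v = -(1/4) * (ξ₁ D k_d r_R v t + ξ₁ D k_d r_R (-v) t) +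
      D * t * (ξ₂ D k_d r_R v t + ξ₂ D k_d r_R (-v) t) := by
  simp only [Hfun, ξ₁, ξ₂]
  ring_nf


/-- surface-average of the point-source observation probability. -/
theorem stmt_4 (D k_d r_R r_T r_0 t : ℝ)
    (hD : 0 < D) (hk : 0 < k_d) (hrR : 0 < r_R) (hrT : 0 < r_T) (hr0 : 0 < r_0)
    (ht : 0 < t) (h0T : r_T < r_0) :
    (1 / (2 * r_T)) *
        ∫ x in (-r_T)..r_T, Pα D k_d r_R t (Real.sqrt (r_T ^ 2 + r_0 ^ 2 - 2 * r_0 * x)) =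
      (1 / (8 * r_0 * r_T)) *
          (ξ₁ D k_d r_R (r_0 - r_T) t + ξ₁ D k_d r_R (r_T - r_0) t -
            ξ₁ D k_d r_R (r_0 + r_T) t - ξ₁ D k_d r_R (-r_0 - r_T) t) +
        (D * t / (2 * r_T * r_0)) *
          (ξ₂ D k_d r_R (r_T + r_0) t + ξ₂ D k_d r_R (-r_T - r_0) t -
            ξ₂ D k_d r_R (r_0 - r_T) t - ξ₂ D k_d r_R (r_T - r_0) t) := by
  have huIcc : Set.uIcc (-r_T) r_T = Set.Icc (-r_T) r_T := Set.uIcc_of_le (by linarith)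
  have hinpos : ∀ x ∈ Set.uIcc (-r_T) r_T, 0 < r_T ^ 2 + r_0 ^ 2 - 2 * r_0 * x := by
    intro x hx
    rw [huIcc, Set.mem_Icc] at hx
    nlinarith [hx.1, hx.2]
  have hgc : Continuous (fun x : ℝ => Real.sqrt (r_T ^ 2 + r_0 ^ 2 - 2 * r_0 * x)) := by
    fun_prop
  have hgne : ∀ x ∈ Set.uIcc (-r_T) r_T,
      Real.sqrt (r_T ^ 2 + r_0 ^ 2 - 2 * r_0 * x) ≠ 0 := fun x hx =>
    (Real.sqrt_pos.2 (hinpos x hx)).ne'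
  -- continuity of the integrand
  have hcont : ContinuousOn
      (fun x => Pα D k_d r_R t (Real.sqrt (r_T ^ 2 + r_0 ^ 2 - 2 * r_0 * x)))
      (Set.uIcc (-r_T) r_T) := by
    simp only [Pα]
    apply ContinuousOn.add
    · apply Continuous.continuousOn
      apply Continuous.mul _ continuous_const
      apply Continuous.mul continuous_const
      exact (erf_continuous.comp ((continuous_const.sub hgc).div_const _)).add
        (erf_continuous.comp ((continuous_const.add hgc).div_const _))
    · refine ContinuousOn.mul (ContinuousOn.mul ?_ continuousOn_const) ?_
      · exact continuousOn_const.div hgc.continuousOn hgne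
      · apply Continuous.continuousOn
        fun_prop
  -- the FTC step
  have hderiv : ∀ x ∈ Set.uIcc (-r_T) r_T,
      HasDerivAt (fun y => (-1 / r_0) *
          Hfun D k_d r_R t (Real.sqrt (r_T ^ 2 + r_0 ^ 2 - 2 * r_0 * y)))
        (Pα D k_d r_R t (Real.sqrt (r_T ^ 2 + r_0 ^ 2 - 2 * r_0 * x))) x := by
    intro x hx
    have hin := hinpos x hx
    have hgx : 0 < Real.sqrt (r_T ^ 2 + r_0 ^ 2 - 2 * r_0 * x) := Real.sqrt_pos.2 hin
    have hinner : HasDerivAt (fun y : ℝ => r_T ^ 2 + r_0 ^ 2 - 2 * r_0 * y)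
        (-(2 * r_0 * 1)) x := ((hasDerivAt_id x).const_mul (2 * r_0)).const_sub _
    have hg := (Real.hasDerivAt_sqrt hin.ne').comp x hinner
    have hk := ((key' D k_d r_R t _ hD ht hgx).comp x hg).const_mul (-1 / r_0)
    refine hk.congr_deriv ?_
    field_simp
    exact mul_div_cancel_left₀ _ (Real.sqrt_pos.2 (by linarith)).ne'
  rw [intervalIntegral.integral_eq_sub_of_hasDerivAt hderiv
    hcont.intervalIntegrable]
  have hvT : Real.sqrt (r_T ^ 2 + r_0 ^ 2 - 2 * r_0 * r_T) = r_0 - r_T := by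
    rw [show r_T ^ 2 + r_0 ^ 2 - 2 * r_0 * r_T = (r_0 - r_T) ^ 2 by ring,
      Real.sqrt_sq (by linarith)]
  have hvmT : Real.sqrt (r_T ^ 2 + r_0 ^ 2 - 2 * r_0 * (-r_T)) = r_0 + r_T := by
    rw [show r_T ^ 2 + r_0 ^ 2 - 2 * r_0 * (-r_T) = (r_0 + r_T) ^ 2 by ring,
      Real.sqrt_sq (by linarith)]
  rw [hvT, hvmT, Hfun_eq, Hfun_eq,
    show r_T - r_0 = -(r_0 - r_T) by ring,
    show (-r_0 : ℝ) - r_T = -(r_0 + r_T) by ring,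
    show r_T + r_0 = r_0 + r_T by ring,
    show (-r_T : ℝ) - r_0 = -(r_0 + r_T) by ring]
  field_simp
  ring
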